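/- Let P be a Feller Markov operator on S¹ that is asymptotically stable with unique invariant measure μ* of full support, and which satisfies the e-property. Then for every open arc I ⊂ S¹ there exists m ∈ ℕ such that inf_{x ∈ S¹} Pᵐδ_x(I) > 0. -/

import Mathlib

open MeasureTheory Filter

abbrev Circle1 := AddCircle (1 : ℝ)

noncomputable def rep (u : Circle1) : ℝ := (AddCircle.equivIco 1 0 u : ℝ)

/-- The open counterclockwise arc from `a` to `b`. -/
def openArc (a b : Circle1) : Set Circle1 :=
  {z | 0 < rep (z - a) ∧ rep (z - a) < rep (b - a)}

lemma rep_mem_Ico (u : Circle1) : rep u ∈ Set.Ico (0:ℝ) 1 := by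
  have := (AddCircle.equivIco 1 0 u).2
  simpa [rep] using this

lemma coe_rep (u : Circle1) : ((rep u : ℝ) : Circle1) = u :=
  (AddCircle.equivIco 1 0).symm_apply_apply u

lemma measurable_rep : Measurable rep :=
  measurable_subtype_coe.comp (AddCircle.measurableEquivIco (T := 1) 0).measurable

set_option maxHeartbeats 1000000 in
/-- For an asymptotically stable Feller Markov operator on the circle with the
e-property, whose invariant measure has full support, the mass given by `Pᵐδ_x` to
any nonempty open arc is bounded below uniformly in `x`, for some iterate `m`. -/
theorem uniform_lower_bound_on_arcs
    (P : Measure Circle1 → Measure Circle1)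
    (hMarkov : ∀ μ : Measure Circle1, IsProbabilityMeasure μ → IsProbabilityMeasure (P μ))
    (U : C(Circle1, ℝ) →ₗ[ℝ] C(Circle1, ℝ))
    (hFeller : ∀ (f : C(Circle1, ℝ)) (μ : Measure Circle1), IsProbabilityMeasure μ →
      ∫ x, U f x ∂μ = ∫ x, f x ∂(P μ))
    (μstar : Measure Circle1) [IsProbabilityMeasure μstar]
    (hinv : P μstar = μstar)
    (hfull : ∀ V : Set Circle1, IsOpen V → V.Nonempty → 0 < μstar V)
    (hstable : ∀ (ν : Measure Circle1), IsProbabilityMeasure ν → ∀ f : C(Circle1, ℝ),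
      Tendsto (fun n : ℕ => ∫ x, f x ∂(P^[n] ν)) atTop (nhds (∫ x, f x ∂μstar)))
    (heprop : ∀ (f : Circle1 → ℝ) (L : NNReal), LipschitzWith L f →
      ∀ x : Circle1, ∀ ε > (0 : ℝ), ∃ δ > (0 : ℝ), ∀ y : Circle1, dist y x < δ →
        ∀ n : ℕ, |(∫ z, f z ∂(P^[n] (Measure.dirac y))) -
          (∫ z, f z ∂(P^[n] (Measure.dirac x)))| ≤ ε) :
    ∀ a b : Circle1, (openArc a b).Nonempty →
      ∃ m : ℕ, 0 < ⨅ x : Circle1, (P^[m] (Measure.dirac x)) (openArc a b) := by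
  intro a b hne
  obtain ⟨z₀, ht0, htβ⟩ := hne
  set β : ℝ := rep (b - a) with hβdef
  set t₀ : ℝ := rep (z₀ - a) with ht₀def
  have hβ1 : β < 1 := (rep_mem_Ico (b - a)).2
  have ht₀1 : t₀ < 1 := (rep_mem_Ico (z₀ - a)).2
  set r : ℝ := min t₀ (β - t₀) / 2 with hrdef
  have hrpos : 0 < r := by
    have : 0 < min t₀ (β - t₀) := lt_min ht0 (by linarith)
    positivity
  have hrt : r ≤ t₀ / 2 := by
    have := min_le_left t₀ (β - t₀); rw [hrdef]; linarith
  have hrb : r ≤ (β - t₀) / 2 := by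
    have := min_le_right t₀ (β - t₀); rw [hrdef]; linarith
  -- the ball of radius r around z₀ is contained in the arc
  have hball : ∀ z, dist z z₀ < r → z ∈ openArc a b := by
    intro z hz
    have hIu := rep_mem_Ico (z - a)
    have hq : ((rep (z - a) - t₀ : ℝ) : Circle1) = z - z₀ := by
      rw [AddCircle.coe_sub, coe_rep, ht₀def, coe_rep]
      abel
    have h1 : ‖z - z₀‖ < r := by rw [← dist_eq_norm]; exact hz
    rw [← hq, AddCircle.norm_eq] at h1
    simp only [inv_one, one_mul, mul_one] at h1
    set d : ℝ := rep (z - a) - t₀ with hddef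
    set k : ℤ := round d with hkdef
    have habs := abs_lt.mp h1
    have hd1 : -1 < d := by rw [hddef]; linarith [hIu.1]
    have hd2 : d < 1 := by rw [hddef]; linarith [hIu.2]
    have hk2 : (-2:ℝ) < (k:ℝ) ∧ (k:ℝ) < 2 := by
      constructor <;> linarith [habs.1, habs.2]
    have hkz : (-2:ℤ) < k ∧ k < 2 := by exact_mod_cast hk2
    have hkcases : k = -1 ∨ k = 0 ∨ k = 1 := by omega
    constructor
    · -- 0 < rep (z - a)
      rcases hkcases with h | h | h <;> rw [h] at habs <;> push_cast at habs
      · exfalso; rw [hddef] at habs; linarith [hIu.1]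
      · rw [hddef] at habs; linarith
      · exfalso; rw [hddef] at habs; linarith [hIu.2]
    · -- rep (z - a) < β
      rcases hkcases with h | h | h <;> rw [h] at habs <;> push_cast at habs
      · exfalso; rw [hddef] at habs; linarith [hIu.1]
      · rw [hddef] at habs; linarith
      · exfalso; rw [hddef] at habs; linarith [hIu.2]
  -- the bump function
  set f : Circle1 → ℝ := fun z => max (r - dist z z₀) 0 with hfdef
  have hlip : LipschitzWith 1 f := by
    have h := ((LipschitzWith.const' (K := 0) r).sub (LipschitzWith.dist_left z₀)).max_const 0
    simpa using h
  have hcont : Continuous f := hlip.continuous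
  have hf0 : ∀ z, 0 ≤ f z := fun z => le_max_right _ _
  have hfr : ∀ z, f z ≤ r := fun z => by
    rw [hfdef]; simp only [max_le_iff]
    exact ⟨by linarith [dist_nonneg (x := z) (y := z₀)], le_of_lt hrpos⟩
  have hfz₀ : f z₀ = r := by rw [hfdef]; simp [le_of_lt hrpos]
  have hsupp : ∀ z, f z ≠ 0 → z ∈ openArc a b := by
    intro z hzne
    apply hball
    by_contra hcon
    push_neg at hcon
    apply hzne
    rw [hfdef]
    simp only [max_eq_right_iff]
    linarith
  have hind : ∀ z, f z ≤ (openArc a b).indicator (fun _ => r) z := by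
    intro z
    by_cases h : z ∈ openArc a b
    · simp [Set.indicator_of_mem h, hfr z]
    · rw [Set.indicator_of_notMem h]
      by_contra hcon
      push_neg at hcon
      exact h (hsupp z (by linarith [hf0 z]))
  have hImeas : MeasurableSet (openArc a b) := by
    have : openArc a b = (fun z => rep (z - a)) ⁻¹' Set.Ioo 0 β := by
      ext z; simp [openArc, Set.mem_Ioo, hβdef]
    rw [this]
    exact (measurable_rep.comp ((continuous_id.sub continuous_const).measurable))
      measurableSet_Ioo
  -- integrability and probability facts
  have hprob : ∀ (n : ℕ) (x : Circle1), IsProbabilityMeasure (P^[n] (Measure.dirac x)) := by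
    intro n x
    induction n with
    | zero => simpa using (inferInstance : IsProbabilityMeasure (Measure.dirac x))
    | succ n ih => rw [Function.iterate_succ_apply']; exact hMarkov _ ih
  have hintegr : ∀ (μ : Measure Circle1), IsProbabilityMeasure μ → Integrable f μ := by
    intro μ hμ
    exact hcont.integrable_of_hasCompactSupport (HasCompactSupport.of_compactSpace f)
  -- the integral against μstar is positive
  set c : ℝ := ∫ z, f z ∂μstar with hcdef
  have hc : 0 < c := by
    rw [hcdef, integral_pos_iff_support_of_nonneg hf0 (hintegr μstar inferInstance)]
    apply hfull
    · exact hcont.isOpen_support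
    · exact ⟨z₀, by simp [Function.mem_support, hfz₀, ne_of_gt hrpos]⟩
  set g : C(Circle1, ℝ) := ⟨f, hcont⟩ with hgdef
  have hgf : ∀ (μ : Measure Circle1), ∫ x, g x ∂μ = ∫ x, f x ∂μ := fun μ => by
    simp only [hgdef, ContinuousMap.coe_mk]
  -- the local uniformity
  have key : ∀ x : Circle1, ∃ δ > (0:ℝ), ∃ N : ℕ, ∀ y, dist y x < δ → ∀ n ≥ N,
      c/2 ≤ ∫ z, f z ∂(P^[n] (Measure.dirac y)) := by
    intro x
    obtain ⟨δ, hδpos, hδ⟩ := heprop f 1 hlip x (c/4) (div_pos hc (by norm_num))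
    have hten := hstable (Measure.dirac x) inferInstance g
    rw [Metric.tendsto_atTop] at hten
    obtain ⟨N, hN⟩ := hten (c/4) (div_pos hc (by norm_num))
    refine ⟨δ, hδpos, N, fun y hy n hn => ?_⟩
    have h1 := hδ y hy n
    have h2 := hN n hn
    rw [Real.dist_eq, hgf] at h2
    have h1' := abs_le.mp h1
    have h2' := abs_lt.mp h2
    rw [hgf] at h2'
    linarith [h1'.1, h2'.1]
  choose δ hδpos N hNkey using key
  obtain ⟨t, -, hcover⟩ := isCompact_univ.elim_nhds_subcover
    (fun x => Metric.ball x (δ x))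
    (fun x _ => Metric.isOpen_ball.mem_nhds (Metric.mem_ball_self (hδpos x)))
  set m : ℕ := t.sup N with hmdef
  have hmain : ∀ y, c/2 ≤ ∫ z, f z ∂(P^[m] (Measure.dirac y)) := by
    intro y
    have hy : y ∈ ⋃ x ∈ t, Metric.ball x (δ x) := hcover (Set.mem_univ y)
    simp only [Set.mem_iUnion] at hy
    obtain ⟨x, hxt, hyx⟩ := hy
    exact hNkey x y (by simpa [Metric.mem_ball] using hyx) m (Finset.le_sup hxt)
  refine ⟨m, ?_⟩
  have hbound : ∀ y, ENNReal.ofReal (c / (2 * r)) ≤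
      (P^[m] (Measure.dirac y)) (openArc a b) := by
    intro y
    set μ := P^[m] (Measure.dirac y) with hμdef
    have hp : IsProbabilityMeasure μ := hprob m y
    have hle : ∫ z, f z ∂μ ≤ (μ (openArc a b)).toReal * r := by
      calc ∫ z, f z ∂μ ≤ ∫ z, (openArc a b).indicator (fun _ => r) z ∂μ := by
            apply integral_mono (hintegr μ hp)
            · exact (integrable_indicator_iff hImeas).2
                (integrableOn_const (measure_ne_top μ _))
            · exact hind
        _ = (μ (openArc a b)).toReal * r := by
            rw [integral_indicator_const _ hImeas]; simp [mul_comm, measureReal_def]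
    have h2 : c/2 ≤ (μ (openArc a b)).toReal * r := le_trans (hmain y) hle
    have h3 : c / (2 * r) ≤ (μ (openArc a b)).toReal := by
      rw [show c / (2 * r) = (c/2) / r by ring]
      exact (div_le_iff₀ hrpos).2 h2
    calc ENNReal.ofReal (c / (2 * r)) ≤ ENNReal.ofReal ((μ (openArc a b)).toReal) :=
          ENNReal.ofReal_le_ofReal h3
      _ = μ (openArc a b) := ENNReal.ofReal_toReal (measure_ne_top μ _)
  refine lt_of_lt_of_le ?_ (le_iInf hbound)
  exact ENNReal.ofReal_pos.2 (div_pos hc (mul_pos two_pos hrpos))
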